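/- Let A be an H-semiprime left H-module algebra over a Hopf algebra H, and let I be an H-stable two-sided ideal of A. Then the following are equivalent: (a) the left annihilator of I in A is zero; (b) I is an essential M_H(A)-submodule of A; (c) I is a dense M_H(A)-submodule of A (i.e. Hom_{M_H(A)}(L/I, A)=0 for every M_H(A)-submodule L of A containing I). -/

import Mathlib

open TensorProduct

noncomputable section

/-! ### Integrals in a Hopf algebra -/

/-- `t` is a left integral in `H`: `h * t = ε(h) • t` for all `h ∈ H`. -/
def IsLeftIntegral (R : Type*) {H : Type*} [CommRing R] [Ring H] [HopfAlgebra R H]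
    (t : H) : Prop :=
  ∀ h : H, h * t = Coalgebra.counit (R := R) h • t

/-- `t` is a right integral in `H`: `t * h = ε(h) • t` for all `h ∈ H`. -/
def IsRightIntegral (R : Type*) {H : Type*} [CommRing R] [Ring H] [HopfAlgebra R H]
    (t : H) : Prop :=
  ∀ h : H, t * h = Coalgebra.counit (R := R) h • t

/-! ### Module algebras -/

variable (R H A : Type*)

/-- Given an `H`-action `ρ` on `A` (an `R`-algebra map `H → End_R A`),
`pairAction ρ w` is the operator on `A ⊗ A` given, for `w = Σ x ⊗ y`, by
`a ⊗ b ↦ Σ (x • a) ⊗ (y • b)`. -/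
def pairAction [CommRing R] [Ring H] [HopfAlgebra R H] [Ring A] [Algebra R A]
    (ρ : H →ₐ[R] Module.End R A) :
    H ⊗[R] H →ₗ[R] A ⊗[R] A →ₗ[R] A ⊗[R] A :=
  (TensorProduct.homTensorHomMap (RingHom.id R) A A A A) ∘ₗ
    (TensorProduct.map ρ.toLinearMap ρ.toLinearMap)

/-- A left `H`-module algebra structure on an `R`-algebra `A`: an `H`-module structure
(an `R`-algebra map `ρ : H → End_R A`) such that multiplication and unit of `A` are
morphisms of `H`-modules, i.e. `h • (a b) = Σ_(h) (h₁ • a)(h₂ • b)` and `h • 1 = ε(h) 1`;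
in other words, `A` is an `R`-algebra in the category of left `H`-modules. -/
structure ModuleAlgebra [CommRing R] [Ring H] [HopfAlgebra R H] [Ring A] [Algebra R A] where
  ρ : H →ₐ[R] Module.End R A
  act_mul : ∀ (h : H) (a b : A),
    ρ h (a * b) = LinearMap.mul' R A (pairAction R H A ρ (Coalgebra.comul h) (a ⊗ₜ[R] b))
  act_one : ∀ h : H, ρ h 1 = algebraMap R A (Coalgebra.counit h)

variable {R H A}

/-- The set of `H`-invariant elements `A^H = {a | h • a = ε(h) a}` of a module algebra. -/
def ModuleAlgebra.invariants [CommRing R] [Ring H] [HopfAlgebra R H] [Ring A] [Algebra R A]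
    (ma : ModuleAlgebra R H A) : Set A :=
  {a : A | ∀ h : H, ma.ρ h a = Coalgebra.counit (R := R) h • a}

/-- The set of central `H`-invariant elements `Z(A)^H` of a module algebra. -/
def ModuleAlgebra.centralInvariants [CommRing R] [Ring H] [HopfAlgebra R H] [Ring A]
    [Algebra R A] (ma : ModuleAlgebra R H A) : Set A :=
  {a : A | (∀ b : A, a * b = b * a) ∧ ∀ h : H, ma.ρ h a = Coalgebra.counit (R := R) h • a}

/-- A subset `I ⊆ A` is `H`-stable if it is closed under the `H`-action. -/
def IsHStable [CommRing R] [Ring H] [HopfAlgebra R H] [Ring A] [Algebra R A]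
    (ma : ModuleAlgebra R H A) (I : Set A) : Prop :=
  ∀ h : H, ∀ x ∈ I, ma.ρ h x ∈ I

variable (R H A)

/-- `B` realises the smash product `A # H` of a left `H`-module algebra `A` with `H`:
`B` contains `A` and `H` as subalgebras, the multiplication map `A ⊗_R H → B`,
`a ⊗ h ↦ a·h` is an `R`-module isomorphism (so `B = A ⊗_R H` as `R`-module), and
`(1 # h)(a # 1) = Σ_(h) (h₁ • a) # h₂` holds, which forces the smash product
multiplication `(a # h)(b # g) = Σ_(h) a (h₁ • b) # h₂ g`. -/
structure SmashProductStructure [CommRing R] [Ring H] [HopfAlgebra R H] [Ring A] [Algebra R A]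
    (ma : ModuleAlgebra R H A) (B : Type*) [Ring B] [Algebra R B] where
  ιA : A →ₐ[R] B
  ιH : H →ₐ[R] B
  mul_bij : Function.Bijective
    ((LinearMap.mul' R B) ∘ₗ (TensorProduct.map ιA.toLinearMap ιH.toLinearMap))
  commute_rel : ∀ (h : H) (a : A),
    ιH h * ιA a =
      LinearMap.mul' R B
        ((TensorProduct.map (ιA.toLinearMap ∘ₗ ((LinearMap.flip ma.ρ.toLinearMap) a))
          ιH.toLinearMap) (Coalgebra.comul h))

variable {R H A}

/-! ### Ideals and semiprimeness -/

/-- The ordered product `a₁ ⋯ aₙ` of a nonempty family of ring elements,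
relative to a multiplication `μ`. -/
def nProd {A : Type*} (μ : A → A → A) : A → List A → A
  | a, [] => a
  | a, b :: l => μ a (nProd μ b l)

/-- `I` is a two-sided ideal of `A` (described as a set). -/
def IsIdealSet (A : Type*) [Ring A] (I : Set A) : Prop :=
  (0 : A) ∈ I ∧ (∀ x ∈ I, ∀ y ∈ I, x + y ∈ I) ∧
    ∀ a : A, ∀ x ∈ I, a * x ∈ I ∧ x * a ∈ I

/-- `I` is a two-sided ideal with respect to a (possibly twisted) multiplication `μ`. -/
def IsIdealSetMul {A : Type*} [Ring A] (μ : A → A → A) (I : Set A) : Prop :=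
  (0 : A) ∈ I ∧ (∀ x ∈ I, ∀ y ∈ I, x + y ∈ I) ∧
    ∀ a : A, ∀ x ∈ I, μ a x ∈ I ∧ μ x a ∈ I

/-- `I` is a nilpotent ideal with respect to the multiplication `μ`: some power `Iⁿ`
vanishes, i.e. all products of `n + 1` elements of `I` are zero. -/
def IsNilpotentMulSet {A : Type*} [Zero A] (μ : A → A → A) (I : Set A) : Prop :=
  ∃ n : ℕ, ∀ f : Fin (n + 1) → A, (∀ i, f i ∈ I) →
    nProd μ (f 0) (List.ofFn fun i : Fin n => f i.succ) = 0

/-- A ring is semiprime if it has no nonzero nilpotent two-sided ideal. -/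
def RingIsSemiprime (A : Type*) [Ring A] : Prop :=
  ∀ I : Set A, IsIdealSet A I → IsNilpotentMulSet (· * ·) I → I ⊆ {0}

/-- A module algebra is `H`-semiprime if it has no nonzero nilpotent `H`-stable
two-sided ideal. -/
def IsHSemiprime [CommRing R] [Ring H] [HopfAlgebra R H] [Ring A] [Algebra R A]
    (ma : ModuleAlgebra R H A) : Prop :=
  ∀ I : Set A, IsIdealSet A I → IsHStable ma I → IsNilpotentMulSet (· * ·) I → I ⊆ {0}


/-! ### Auxiliary results -/

set_option synthInstance.maxHeartbeats 400000
set_option maxHeartbeats 1000000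

section Aux

variable {R H A : Type*} [CommRing R] [Ring H] [HopfAlgebra R H] [Ring A] [Algebra R A]

/-- Key Hopf-algebra identity consequence: the left annihilator of an `H`-stable set is
`H`-stable. -/
lemma aux_key (ma : ModuleAlgebra R H A) (I : Set A)
    (hIs : IsHStable ma I)
    (a : A) (ha : ∀ y ∈ I, a * y = 0) (h : H) (x : A) (hx : x ∈ I) :
    ma.ρ h a * x = 0 := by
  classical
  set ρ' : H →ₗ[R] (A →ₗ[R] A) := ma.ρ.toLinearMap with hρ'
  set ra : H →ₗ[R] A := ρ'.flip a with hra
  set rx : H →ₗ[R] A := ρ'.flip x with hrx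
  set mS : H ⊗[R] H →ₗ[R] H :=
    LinearMap.mul' R H ∘ₗ LinearMap.lTensor H (HopfAlgebra.antipode (R := R)) with hmS
  set P0 : H ⊗[R] (H ⊗[R] H) →ₗ[R] A :=
    LinearMap.mul' R A ∘ₗ TensorProduct.map ra (rx ∘ₗ mS) with hP0
  set T : H ⊗[R] H →ₗ[R] A :=
    P0 ∘ₗ (TensorProduct.assoc R H H H).toLinearMap ∘ₗ
      LinearMap.rTensor H (Coalgebra.comul (R := R)) with hT
  -- (1): value of T on pure tensors
  have h1 : ∀ g k : H, T (g ⊗ₜ[R] k)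
      = ma.ρ g (a * ma.ρ (HopfAlgebra.antipode (R := R) k) x) := by
    intro g k
    rw [ma.act_mul]
    have : ∀ w : H ⊗[R] H,
        P0 ((TensorProduct.assoc R H H H) (w ⊗ₜ[R] k)) =
          LinearMap.mul' R A
            (pairAction R H A ma.ρ w (a ⊗ₜ[R] (ma.ρ (HopfAlgebra.antipode (R := R) k) x))) := by
      intro w
      induction w using TensorProduct.induction_on with
      | zero =>
          simp only [TensorProduct.zero_tmul, LinearEquiv.map_zero, map_zero,
            LinearMap.zero_apply]
      | tmul s t =>
          simp [hP0, hra, hrx, hmS, hρ', pairAction, map_mul, Module.End.mul_apply]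
      | add u v hu hv =>
          simp only [add_tmul, map_add, LinearMap.add_apply, hu, hv]
    have hTval : T (g ⊗ₜ[R] k) = P0 ((TensorProduct.assoc R H H H)
        ((Coalgebra.comul (R := R) g) ⊗ₜ[R] k)) := by
      simp [hT]
    rw [hTval, this]
  -- (2): T ∘ comul computes (h • a) * x
  have h2 : T (Coalgebra.comul h) = ma.ρ h a * x := by
    have step1 : T (Coalgebra.comul h) =
        P0 ((Coalgebra.comul (R := R)).lTensor H (Coalgebra.comul h)) := by
      simp only [hT, LinearMap.comp_apply, LinearEquiv.coe_coe]
      rw [Coalgebra.coassoc_apply]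
    have step2 : P0 ∘ₗ (Coalgebra.comul (R := R)).lTensor H =
        LinearMap.mul' R A ∘ₗ TensorProduct.map ra
          (LinearMap.toSpanSingleton R A x ∘ₗ Coalgebra.counit (R := R)) := by
      apply TensorProduct.ext'
      intro g k
      have hcom : ma.ρ (algebraMap R H (Coalgebra.counit (R := R) k)) x
          = Coalgebra.counit (R := R) k • x := by
        rw [ma.ρ.commutes, Module.algebraMap_end_apply]
      simp only [hP0, LinearMap.comp_apply, LinearMap.lTensor_tmul, TensorProduct.map_tmul,
        hmS, HopfAlgebra.mul_antipode_lTensor_comul_apply, hrx, hρ', LinearMap.flip_apply,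
        AlgHom.toLinearMap_apply, hcom, LinearMap.toSpanSingleton_apply]
    have step3 : (LinearMap.mul' R A ∘ₗ TensorProduct.map ra
          (LinearMap.toSpanSingleton R A x ∘ₗ Coalgebra.counit (R := R)))
        (Coalgebra.comul h) = ma.ρ h a * x := by
      rw [← LinearMap.map_comp_lTensor]
      simp only [LinearMap.comp_apply, Coalgebra.lTensor_counit_comul,
        TensorProduct.map_tmul, LinearMap.toSpanSingleton_apply, one_smul,
        LinearMap.mul'_apply, hra, hρ', LinearMap.flip_apply, AlgHom.toLinearMap_apply]
    rw [step1, ← LinearMap.comp_apply, step2, step3]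
  -- T vanishes
  have h0 : ∀ w : H ⊗[R] H, T w = 0 := by
    intro w
    induction w using TensorProduct.induction_on with
    | zero => simp
    | tmul g k =>
        rw [h1 g k, ha _ (hIs _ x hx), map_zero]
    | add u v hu hv => simp [hu, hv]
  rw [← h2, h0]

end Aux

open Classical in
/-- Projection onto the `J`-component of a sum decomposition `z = u + v`, `u ∈ I`, `v ∈ J`. -/
noncomputable def sumProj {A : Type*} [Ring A] (I J : Set A) (z : A) : A :=
  if hz : ∃ u v : A, u ∈ I ∧ v ∈ J ∧ z = u + v then hz.choose_spec.choose else 0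

lemma sumProj_spec {A : Type*} [Ring A] {I J : Set A}
    (huniq : ∀ u₁ v₁ u₂ v₂ : A, u₁ ∈ I → v₁ ∈ J → u₂ ∈ I → v₂ ∈ J →
      u₁ + v₁ = u₂ + v₂ → v₁ = v₂)
    {u v : A} (hu : u ∈ I) (hv : v ∈ J) : sumProj I J (u + v) = v := by
  classical
  have hz : ∃ u' v' : A, u' ∈ I ∧ v' ∈ J ∧ u + v = u' + v' := ⟨u, v, hu, hv, rfl⟩
  rw [sumProj, dif_pos hz]
  obtain ⟨h1, h2, h3⟩ := hz.choose_spec.choose_spec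
  exact huniq _ _ _ _ h1 h2 hu hv h3.symm

/-- Let `A` be an `H`-semiprime left `H`-module algebra and `I` an
`H`-stable two-sided ideal of `A` (that is, an `M_H(A)`-submodule of `A`).  The
following are equivalent: (a) the left annihilator of `I` in `A` is zero; (b) `I` is an
essential `M_H(A)`-submodule of `A` (it meets every nonzero `H`-stable ideal
nontrivially); (c) `I` is a dense `M_H(A)`-submodule of `A`: for every `H`-stable ideal
`L ⊇ I`, every `M_H(A)`-linear map `L → A` (one commuting with left and right
multiplications and with the `H`-action) vanishing on `I` is zero. -/
theorem hstable_ideal_annihilator_essential_dense_tfae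
    {R H A : Type*} [CommRing R] [Ring H] [HopfAlgebra R H] [Ring A] [Algebra R A]
    (ma : ModuleAlgebra R H A) (hA : IsHSemiprime ma)
    (I : Set A) (hI : IsIdealSet A I) (hIs : IsHStable ma I) :
    List.TFAE [
      -- (a) zero left annihilator
      ∀ a : A, (∀ x ∈ I, a * x = 0) → a = 0,
      -- (b) essential M_H(A)-submodule
      ∀ J : Set A, IsIdealSet A J → IsHStable ma J → (∃ x ∈ J, x ≠ 0) →
        ∃ x : A, x ≠ 0 ∧ x ∈ I ∧ x ∈ J,
      -- (c) dense M_H(A)-submodule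
      ∀ L : Set A, IsIdealSet A L → IsHStable ma L → I ⊆ L →
        ∀ f : A → A,
          (∀ x ∈ L, ∀ y ∈ L, f (x + y) = f x + f y) →
          (∀ a : A, ∀ x ∈ L, f (a * x) = a * f x) →
          (∀ a : A, ∀ x ∈ L, f (x * a) = f x * a) →
          (∀ h : H, ∀ x ∈ L, f (ma.ρ h x) = ma.ρ h (f x)) →
          (∀ x ∈ I, f x = 0) →
          ∀ x ∈ L, f x = 0] := by
  classical
  -- negation closure of ideal sets
  have negmem : ∀ (K : Set A), IsIdealSet A K → ∀ x ∈ K, -x ∈ K := by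
    intro K hK x hx
    simpa [neg_one_mul] using (hK.2.2 (-1) x hx).1
  tfae_have 1 → 3 := by
    intro h1 L hL hLs hIL f fadd fmul fmulr fact fvan x hx
    apply h1
    intro y hy
    rw [← fmulr y x hx]
    exact fvan _ (hI.2.2 x y hy).1
  tfae_have 3 → 2 := by
    intro h3 J hJ hJs hJne
    obtain ⟨y, hyJ, hy0⟩ := hJne
    by_contra hcon
    push_neg at hcon
    have hdisj : ∀ z, z ∈ I → z ∈ J → z = 0 := by
      intro z hzI hzJ
      by_contra h0
      exact hcon z h0 hzI hzJ
    have huniq : ∀ u₁ v₁ u₂ v₂ : A, u₁ ∈ I → v₁ ∈ J → u₂ ∈ I → v₂ ∈ J →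
        u₁ + v₁ = u₂ + v₂ → v₁ = v₂ := by
      intro u₁ v₁ u₂ v₂ hu₁ hv₁ hu₂ hv₂ heq
      have hJm : v₁ - v₂ ∈ J := by
        have := hJ.2.1 v₁ hv₁ (-v₂) (negmem J hJ v₂ hv₂)
        simpa [sub_eq_add_neg] using this
      have hIm : v₁ - v₂ ∈ I := by
        have h' : v₁ - v₂ = u₂ - u₁ := by
          rw [sub_eq_sub_iff_add_eq_add, add_comm v₁ u₁]
          exact heq
        rw [h']
        have := hI.2.1 u₂ hu₂ (-u₁) (negmem I hI u₁ hu₁)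
        simpa [sub_eq_add_neg] using this
      have := hdisj _ hIm hJm
      exact sub_eq_zero.mp this
    set L : Set A := {z : A | ∃ u v : A, u ∈ I ∧ v ∈ J ∧ z = u + v} with hLdef
    have hmemL : ∀ u v : A, u ∈ I → v ∈ J → u + v ∈ L := by
      intro u v hu hv; exact ⟨u, v, hu, hv, rfl⟩
    have hL : IsIdealSet A L := by
      refine ⟨⟨0, 0, hI.1, hJ.1, by simp⟩, ?_, ?_⟩
      · rintro _ ⟨u, v, hu, hv, rfl⟩ _ ⟨u', v', hu', hv', rfl⟩
        exact ⟨u + u', v + v', hI.2.1 u hu u' hu', hJ.2.1 v hv v' hv', by abel⟩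
      · rintro b _ ⟨u, v, hu, hv, rfl⟩
        constructor
        · exact ⟨b * u, b * v, (hI.2.2 b u hu).1, (hJ.2.2 b v hv).1, by rw [mul_add]⟩
        · exact ⟨u * b, v * b, (hI.2.2 b u hu).2, (hJ.2.2 b v hv).2, by rw [add_mul]⟩
    have hLs : IsHStable ma L := by
      rintro h _ ⟨u, v, hu, hv, rfl⟩
      exact ⟨ma.ρ h u, ma.ρ h v, hIs h u hu, hJs h v hv, by rw [map_add]⟩
    have hIL : I ⊆ L := fun z hz => ⟨z, 0, hz, hJ.1, by simp⟩
    set f : A → A := sumProj I J with hfdef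
    have fspec : ∀ u v : A, u ∈ I → v ∈ J → f (u + v) = v := by
      intro u v hu hv; exact sumProj_spec huniq hu hv
    have := h3 L hL hLs hIL f
      (by rintro _ ⟨u, v, hu, hv, rfl⟩ _ ⟨u', v', hu', hv', rfl⟩
          rw [show u + v + (u' + v') = (u + u') + (v + v') by abel,
            fspec _ _ (hI.2.1 u hu u' hu') (hJ.2.1 v hv v' hv'), fspec _ _ hu hv,
            fspec _ _ hu' hv'])
      (by rintro b _ ⟨u, v, hu, hv, rfl⟩
          rw [mul_add, fspec _ _ (hI.2.2 b u hu).1 (hJ.2.2 b v hv).1, fspec _ _ hu hv])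
      (by rintro b _ ⟨u, v, hu, hv, rfl⟩
          rw [add_mul, fspec _ _ (hI.2.2 b u hu).2 (hJ.2.2 b v hv).2, fspec _ _ hu hv])
      (by rintro h _ ⟨u, v, hu, hv, rfl⟩
          rw [map_add, fspec _ _ (hIs h u hu) (hJs h v hv), fspec _ _ hu hv])
      (by intro z hz
          have : f (z + 0) = 0 := fspec z 0 hz hJ.1
          simpa using this)
      y (⟨0, y, hI.1, hyJ, by simp⟩)
    have hy : f y = y := by
      have : f (0 + y) = y := fspec 0 y hI.1 hyJ
      simpa using this
    exact hy0 (by rw [← hy, this])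
  tfae_have 2 → 1 := by
    intro h2 a ha
    by_contra ha0
    set J : Set A := {b : A | ∀ x ∈ I, b * x = 0} with hJdef
    have hJ : IsIdealSet A J := by
      refine ⟨fun x hx => by simp, ?_, ?_⟩
      · intro b hb c hc x hx
        rw [add_mul, hb x hx, hc x hx, add_zero]
      · intro c b hb
        constructor
        · intro x hx
          rw [mul_assoc, hb x hx, mul_zero]
        · intro x hx
          rw [mul_assoc]
          exact hb _ (hI.2.2 c x hx).1
    have hJs : IsHStable ma J := by
      intro h b hb x hx
      exact aux_key ma I hIs b hb h x hx
    obtain ⟨z, hz0, hzI, hzJ⟩ := h2 J hJ hJs ⟨a, ha, ha0⟩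
    -- K = I ∩ J is a nilpotent H-stable ideal containing z ≠ 0
    have hK : IsIdealSet A (I ∩ J) := by
      refine ⟨⟨hI.1, hJ.1⟩, ?_, ?_⟩
      · rintro x ⟨hx1, hx2⟩ y ⟨hy1, hy2⟩
        exact ⟨hI.2.1 x hx1 y hy1, hJ.2.1 x hx2 y hy2⟩
      · rintro b x ⟨hx1, hx2⟩
        exact ⟨⟨(hI.2.2 b x hx1).1, (hJ.2.2 b x hx2).1⟩,
          ⟨(hI.2.2 b x hx1).2, (hJ.2.2 b x hx2).2⟩⟩
    have hKs : IsHStable ma (I ∩ J) := by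
      rintro h x ⟨hx1, hx2⟩
      exact ⟨hIs h x hx1, hJs h x hx2⟩
    have hKnil : IsNilpotentMulSet (· * ·) (I ∩ J) := by
      refine ⟨1, ?_⟩
      intro f hf
      have : nProd (· * ·) (f 0) (List.ofFn fun (i : Fin 1) => f i.succ) = f 0 * f 1 := by
        simp [List.ofFn_succ, List.ofFn_zero, nProd]
      rw [this]
      exact (hf 0).2 (f 1) (hf 1).1
    have := hA (I ∩ J) hK hKs hKnil ⟨hzI, hzJ⟩
    exact hz0 this
  tfae_finish

end
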